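/- arXiv:2301.04247 — 2 statements merged into one kernel-verified Lean document; each statement's English description precedes it below -/
import Mathlib

section
/- Let A be a C*-algebra and H an algebraically finitely generated Hilbert A-module, meaning H = ξ₁·Ã + ⋯ + ξₙ·Ã for some ξᵢ ∈ H (Ã the minimal unitization). Then there exist y₁, …, yₙ ∈ H with H = {∑ᵢ yᵢ·aᵢ : aᵢ ∈ A}, i.e., H is algebraically generated using only elements of A. -/
open scoped RightActions

/-- The Hilbert C⋆-module class as it stood in Mathlib (December 2024): a right `A`-module
(action of `Aᵐᵒᵖ`) with an `A`-valued inner product, `A`-linear on the right. -/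
class RightCStarModule (A E : Type*) [NonUnitalSemiring A] [StarRing A]
    [Module ℂ A] [AddCommGroup E] [Module ℂ E] [PartialOrder A] [SMul Aᵐᵒᵖ E] [Norm A] [Norm E]
    extends Inner A E where
  inner_add_right {x} {y} {z} : inner x (y + z) = inner x y + inner x z
  inner_self_nonneg {x} : 0 ≤ inner x x
  inner_self {x} : inner x x = 0 ↔ x = 0
  inner_op_smul_right {a : A} {x y : E} : inner x (y <• a) = inner x y * a
  inner_smul_right_complex {z : ℂ} {x} {y} : inner x (z • y) = z • inner x y
  star_inner x y : star (inner x y) = inner y x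
  norm_eq_sqrt_norm_inner_self x : ‖x‖ = √‖inner x x‖

noncomputable def myF (ε : ℝ) (s : ℝ) : ℝ := Real.sqrt s * Real.sqrt (Real.sqrt s) / (s + ε)
noncomputable def myQ (s : ℝ) : ℝ := Real.sqrt (Real.sqrt s)

lemma myQ_cont : Continuous myQ := Real.continuous_sqrt.comp Real.continuous_sqrt
lemma myQ_zero : myQ 0 = 0 := by simp [myQ]
lemma myF_zero (ε : ℝ) : myF ε 0 = 0 := by simp [myF]

lemma myF_contOn {ε : ℝ} (hε : 0 < ε) {S : Set ℝ} (hS : S ⊆ Set.Ici 0) :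
    ContinuousOn (myF ε) S := by
  apply ContinuousOn.div
  · exact (Real.continuous_sqrt.mul myQ_cont).continuousOn
  · fun_prop
  · intro s hs
    have : (0:ℝ) ≤ s := hS hs
    positivity

lemma my_key1 {s ε δ : ℝ} (hs : 0 ≤ s) (hδ : 0 < δ) (hδε : δ ≤ ε) :
    s * (myF ε s - myF δ s) ^ 2 ≤ Real.sqrt ε := by
  simp only [myF]
  have hε : (0:ℝ) < ε := hδ.trans_le hδε
  have hpε : (0:ℝ) < s + ε := by linarith
  have hpδ : (0:ℝ) < s + δ := by linarith
  set u := Real.sqrt s * Real.sqrt (Real.sqrt s) with hu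
  have hss : Real.sqrt s * Real.sqrt s = s := Real.mul_self_sqrt hs
  have hqq : Real.sqrt (Real.sqrt s) * Real.sqrt (Real.sqrt s) = Real.sqrt s :=
    Real.mul_self_sqrt (Real.sqrt_nonneg s)
  have hu2 : u ^ 2 = s * Real.sqrt s := by
    rw [hu]; nlinarith [hss, hqq]
  have hdiff : u / (s + ε) - u / (s + δ) = u * (δ - ε) / ((s + ε) * (s + δ)) := by
    field_simp
    ring
  rw [hdiff, div_pow, mul_pow, hu2, mul_div_assoc']
  rw [div_le_iff₀ (by positivity)]
  have hee : Real.sqrt ε * Real.sqrt ε = ε := Real.mul_self_sqrt hε.le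
  have h1 : Real.sqrt s * Real.sqrt ε ≤ s + ε := by
    nlinarith [sq_nonneg (Real.sqrt s - Real.sqrt ε)]
  have h2 : (δ - ε) ^ 2 ≤ ε ^ 2 := by nlinarith
  have e2 : Real.sqrt s * ε ^ 2 ≤ Real.sqrt ε * ((s + ε) * (s + ε)) := by
    calc Real.sqrt s * ε ^ 2 = (Real.sqrt s * Real.sqrt ε) * (Real.sqrt ε * ε) := by
            rw [show (Real.sqrt s * Real.sqrt ε) * (Real.sqrt ε * ε)
              = Real.sqrt s * ((Real.sqrt ε * Real.sqrt ε) * ε) from by ring, hee]; ring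
      _ ≤ (s + ε) * (Real.sqrt ε * ε) :=
            mul_le_mul_of_nonneg_right h1 (by positivity)
      _ ≤ (s + ε) * (Real.sqrt ε * (s + ε)) := by
            have : ε ≤ s + ε := by linarith
            gcongr
      _ = Real.sqrt ε * ((s + ε) * (s + ε)) := by ring
  calc s * (s * Real.sqrt s * (δ - ε) ^ 2)
      = (s * s) * (Real.sqrt s * (δ - ε) ^ 2) := by ring
    _ ≤ ((s + δ) * (s + δ)) * (Real.sqrt s * ε ^ 2) := by
        apply mul_le_mul (by nlinarith) (mul_le_mul_of_nonneg_left h2 (Real.sqrt_nonneg s))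
          (by positivity) (by positivity)
    _ ≤ ((s + δ) * (s + δ)) * (Real.sqrt ε * ((s + ε) * (s + ε))) :=
        mul_le_mul_of_nonneg_left e2 (by positivity)
    _ = Real.sqrt ε * ((s + ε) * (s + δ)) ^ 2 := by ring

lemma my_key2 {s ε : ℝ} (hs : 0 ≤ s) (hε : 0 < ε) :
    |s - s * (myF ε s * myQ s) - (myF ε s * myQ s) * s
      + (myF ε s * myQ s) * (s * (myF ε s * myQ s))| ≤ ε := by
  simp only [myF, myQ]
  have hp : (0:ℝ) < s + ε := by linarith
  have hqq : Real.sqrt (Real.sqrt s) * Real.sqrt (Real.sqrt s) = Real.sqrt s :=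
    Real.mul_self_sqrt (Real.sqrt_nonneg s)
  have hss : Real.sqrt s * Real.sqrt s = s := Real.mul_self_sqrt hs
  have hh : Real.sqrt s * Real.sqrt (Real.sqrt s) / (s + ε) * Real.sqrt (Real.sqrt s)
      = s / (s + ε) := by
    rw [div_mul_eq_mul_div, mul_assoc, hqq, hss]
  rw [hh]
  have hK : s - s * (s / (s + ε)) - s / (s + ε) * s + s / (s + ε) * (s * (s / (s + ε)))
      = s * ε ^ 2 / (s + ε) ^ 2 := by
    field_simp
    ring
  rw [hK, abs_of_nonneg (by positivity), div_le_iff₀ (by positivity)]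
  nlinarith [mul_nonneg (mul_nonneg hε.le hs) hs, mul_nonneg (mul_nonneg hs hε.le) hε.le,
    pow_pos hε 3]

namespace RightCStarModule
variable {A E : Type*} [NonUnitalCStarAlgebra A] [PartialOrder A]
    [NormedAddCommGroup E] [NormedSpace ℂ E] [SMul Aᵐᵒᵖ E] [RightCStarModule A E]

lemma inner_sub_right {x y z : E} : inner A x (y - z) = inner A x y - inner A x z :=
  map_sub (AddMonoidHom.mk' (inner A x) (fun _ _ => RightCStarModule.inner_add_right)) y z

lemma inner_add_left {x y z : E} : inner A (x + y) z = inner A x z + inner A y z := by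
  rw [← RightCStarModule.star_inner z, RightCStarModule.inner_add_right, star_add,
    RightCStarModule.star_inner, RightCStarModule.star_inner]

lemma inner_sub_left {x y z : E} : inner A (x - y) z = inner A x z - inner A y z := by
  rw [← RightCStarModule.star_inner z, RightCStarModule.inner_sub_right, star_sub,
    RightCStarModule.star_inner, RightCStarModule.star_inner]

lemma inner_op_smul_left {a : A} {x y : E} : inner A (x <• a) y = star a * inner A x y := by
  rw [← RightCStarModule.star_inner y, RightCStarModule.inner_op_smul_right, star_mul,
    RightCStarModule.star_inner]

lemma inner_smul_left_complex {z : ℂ} {x y : E} : inner A (z • x) y = star z • inner A x y := by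
  rw [← RightCStarModule.star_inner y, RightCStarModule.inner_smul_right_complex, star_smul,
    RightCStarModule.star_inner]

lemma norm_sq_eq {x : E} : ‖x‖ ^ 2 = ‖inner A x x‖ := by
  rw [RightCStarModule.norm_eq_sqrt_norm_inner_self (A := A) x, Real.sq_sqrt (norm_nonneg _)]

end RightCStarModule

section helpers
variable {A E : Type*} [NonUnitalCStarAlgebra A] [PartialOrder A] [StarOrderedRing A]
    [NormedAddCommGroup E] [NormedSpace ℂ E] [SMul Aᵐᵒᵖ E] [RightCStarModule A E]

local notation "⟪" x ", " y "⟫" => inner (𝕜 := A) x y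

omit [StarOrderedRing A] in
lemma my_ext {z w : E} (h : ⟪z - w, z - w⟫ = 0) : z = w :=
  sub_eq_zero.mp (RightCStarModule.inner_self.mp h)

omit [StarOrderedRing A] in
lemma my_op_smul_add (x : E) (a b : A) : x <• (a + b) = x <• a + x <• b := by
  apply my_ext (A := A)
  simp only [RightCStarModule.inner_sub_left, RightCStarModule.inner_sub_right,
    RightCStarModule.inner_add_left, RightCStarModule.inner_add_right,
    RightCStarModule.inner_op_smul_left, RightCStarModule.inner_op_smul_right, star_add]
  noncomm_ring

omit [StarOrderedRing A] in
lemma my_op_smul_sub (x : E) (a b : A) : x <• (a - b) = x <• a - x <• b := by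
  apply my_ext (A := A)
  simp only [RightCStarModule.inner_sub_left, RightCStarModule.inner_sub_right,
    RightCStarModule.inner_op_smul_left, RightCStarModule.inner_op_smul_right, star_sub]
  noncomm_ring

omit [StarOrderedRing A] in
lemma my_op_smul_mul (x : E) (a b : A) : (x <• a) <• b = x <• (a * b) := by
  apply my_ext (A := A)
  simp only [RightCStarModule.inner_sub_left, RightCStarModule.inner_sub_right,
    RightCStarModule.inner_op_smul_left, RightCStarModule.inner_op_smul_right, star_mul]
  noncomm_ring

lemma my_smul_op_smul (x : E) (c : ℂ) (a : A) : c • (x <• a) = x <• (c • a) := by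
  apply my_ext (A := A)
  simp only [RightCStarModule.inner_sub_left, RightCStarModule.inner_sub_right,
    RightCStarModule.inner_op_smul_left, RightCStarModule.inner_op_smul_right,
    RightCStarModule.inner_smul_left_complex, RightCStarModule.inner_smul_right_complex, star_smul,
    smul_mul_assoc, mul_smul_comm, RCLike.star_def, smul_smul]
  simp

omit [StarOrderedRing A] in
lemma my_sub_op_smul (x y : E) (a : A) : (x - y) <• a = x <• a - y <• a := by
  apply my_ext (A := A)
  simp only [RightCStarModule.inner_sub_left, RightCStarModule.inner_sub_right,
    RightCStarModule.inner_op_smul_left, RightCStarModule.inner_op_smul_right]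
  noncomm_ring

omit [StarOrderedRing A] in
lemma my_norm_op_smul_le (x : E) (a : A) : ‖x <• a‖ ≤ ‖a‖ * ‖x‖ := by
  have h2 : ‖x <• a‖ ^ 2 ≤ (‖a‖ * ‖x‖) ^ 2 := by
    rw [RightCStarModule.norm_sq_eq (A := A), RightCStarModule.inner_op_smul_left,
      RightCStarModule.inner_op_smul_right]
    calc ‖star a * (⟪x, x⟫ * a)‖ ≤ ‖star a‖ * ‖⟪x, x⟫ * a‖ := norm_mul_le _ _
      _ ≤ ‖star a‖ * (‖⟪x, x⟫‖ * ‖a‖) := by gcongr; exact norm_mul_le _ _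
      _ = (‖a‖ * ‖x‖) ^ 2 := by rw [norm_star, ← RightCStarModule.norm_sq_eq (A := A)]; ring
  nlinarith [norm_nonneg (x <• a), mul_nonneg (norm_nonneg a) (norm_nonneg x)]

end helpers

section factor
variable {A E : Type*} [NonUnitalCStarAlgebra A] [PartialOrder A] [StarOrderedRing A]
    [NormedAddCommGroup E] [NormedSpace ℂ E] [SMul Aᵐᵒᵖ E] [RightCStarModule A E] [CompleteSpace E]

local notation "⟪" x ", " y "⟫" => inner (𝕜 := A) x y

open Filter in
lemma my_factor (x : E) : ∃ (y : E) (a : A), x = y <• a := by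
  set t : A := ⟪x, x⟫ with ht_def
  have ht : (0:A) ≤ t := RightCStarModule.inner_self_nonneg
  have htsa : IsSelfAdjoint t := .of_nonneg ht
  have hσ : ∀ s ∈ quasispectrum ℝ t, (0:ℝ) ≤ s := quasispectrum_nonneg_of_nonneg t ht
  have hσ' : quasispectrum ℝ t ⊆ Set.Ici 0 := fun s hs => hσ s hs
  have hidC : ContinuousOn (fun s : ℝ => s) (quasispectrum ℝ t) := continuous_id.continuousOn
  have hqC : ContinuousOn myQ (quasispectrum ℝ t) := myQ_cont.continuousOn
  have inner_calc : ∀ w : A, ⟪x <• w, x <• w⟫ = star w * (t * w) := fun w => by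
    rw [RightCStarModule.inner_op_smul_left, RightCStarModule.inner_op_smul_right]
  -- the approximating sequence
  set u : ℕ → ℝ := fun k => 1 / (k + 1) with hu_def
  have hu_pos : ∀ k, 0 < u k := fun k => by positivity
  have hu_anti : ∀ {k m : ℕ}, k ≤ m → u m ≤ u k := by
    intro k m h
    apply one_div_le_one_div_of_le (by positivity)
    have : (k:ℝ) ≤ m := Nat.cast_le.mpr h
    linarith
  -- main Cauchy estimate
  have est : ∀ {ε δ : ℝ}, 0 < δ → δ ≤ ε →
      ‖x <• cfcₙ (myF ε) t - x <• cfcₙ (myF δ) t‖ ≤ Real.sqrt (Real.sqrt ε) := by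
    intro ε δ hδ hδε
    have hε := hδ.trans_le hδε
    have hFε : ContinuousOn (myF ε) (quasispectrum ℝ t) := myF_contOn hε hσ'
    have hFδ : ContinuousOn (myF δ) (quasispectrum ℝ t) := myF_contOn hδ hσ'
    have hGc : ContinuousOn (fun s => myF ε s - myF δ s) (quasispectrum ℝ t) := hFε.sub hFδ
    have hG0 : myF ε 0 - myF δ 0 = 0 := by simp [myF_zero]
    have hGidC : ContinuousOn (fun s => s * (myF ε s - myF δ s)) (quasispectrum ℝ t) :=
      hidC.mul hGc
    have hw : x <• cfcₙ (myF ε) t - x <• cfcₙ (myF δ) t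
        = x <• cfcₙ (fun s => myF ε s - myF δ s) t := by
      rw [cfcₙ_sub (myF ε) (myF δ) t hFε (myF_zero ε) hFδ (myF_zero δ), my_op_smul_sub]
    set w : A := cfcₙ (fun s => myF ε s - myF δ s) t with hw_def
    have hkey : ⟪x <• w, x <• w⟫
        = cfcₙ (fun s => (myF ε s - myF δ s) * (s * (myF ε s - myF δ s))) t := by
      rw [inner_calc]
      have hsa : IsSelfAdjoint w := cfcₙ_predicate _ t
      rw [hsa.star_eq]
      have h1 : cfcₙ (fun s : ℝ => s * (myF ε s - myF δ s)) t
          = t * cfcₙ (fun s => myF ε s - myF δ s) t := by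
        rw [cfcₙ_mul _ _ t hidC rfl hGc hG0, cfcₙ_id' ℝ t htsa]
      have h2 : cfcₙ (fun s => (myF ε s - myF δ s) * (s * (myF ε s - myF δ s))) t
          = cfcₙ (fun s => myF ε s - myF δ s) t
            * cfcₙ (fun s : ℝ => s * (myF ε s - myF δ s)) t := by
        rw [cfcₙ_mul _ _ t hGc hG0 hGidC (by simpa using hG0)]
      rw [h2, h1, hw_def]
    have hnorm2 : ‖x <• w‖ ^ 2 ≤ Real.sqrt ε := by
      rw [RightCStarModule.norm_sq_eq (A := A), hkey]
      apply norm_cfcₙ_le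
      intro s hs
      have hs0 := hσ s hs
      rw [show (myF ε s - myF δ s) * (s * (myF ε s - myF δ s))
        = s * (myF ε s - myF δ s) ^ 2 from by ring, Real.norm_eq_abs,
        abs_of_nonneg (by positivity)]
      exact my_key1 hs0 hδ hδε
    rw [hw]
    calc ‖x <• w‖ = Real.sqrt (‖x <• w‖ ^ 2) := (Real.sqrt_sq (norm_nonneg _)).symm
      _ ≤ Real.sqrt (Real.sqrt ε) := Real.sqrt_le_sqrt hnorm2
  -- Cauchy
  set y : ℕ → E := fun k => x <• cfcₙ (myF (u k)) t with hy_def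
  have hcauchy : CauchySeq y := by
    apply cauchySeq_of_le_tendsto_0 (fun N => Real.sqrt (Real.sqrt (u N)))
    · intro n m N hn hm
      rcases le_total (u n) (u m) with h | h
      · calc dist (y n) (y m) = ‖y m - y n‖ := by rw [dist_eq_norm, norm_sub_rev]
          _ ≤ Real.sqrt (Real.sqrt (u m)) := est (hu_pos n) h
          _ ≤ Real.sqrt (Real.sqrt (u N)) :=
              Real.sqrt_le_sqrt (Real.sqrt_le_sqrt (hu_anti hm))
      · calc dist (y n) (y m) = ‖y n - y m‖ := dist_eq_norm _ _
          _ ≤ Real.sqrt (Real.sqrt (u n)) := est (hu_pos m) h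
          _ ≤ Real.sqrt (Real.sqrt (u N)) :=
              Real.sqrt_le_sqrt (Real.sqrt_le_sqrt (hu_anti hn))
    · have h1 : Tendsto u atTop (nhds 0) := tendsto_one_div_add_atTop_nhds_zero_nat
      have := ((Real.continuous_sqrt.comp Real.continuous_sqrt).tendsto' 0 0 (by simp)).comp h1
      simpa [Function.comp_def] using this
  obtain ⟨ylim, hylim⟩ := cauchySeq_tendsto_of_complete hcauchy
  refine ⟨ylim, cfcₙ myQ t, ?_⟩
  -- identify the products
  have hc : ∀ k, y k <• cfcₙ myQ t = x <• cfcₙ (fun s => myF (u k) s * myQ s) t := by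
    intro k
    rw [hy_def]
    simp only
    rw [my_op_smul_mul, ← cfcₙ_mul (myF (u k)) myQ t (myF_contOn (hu_pos k) hσ')
      (myF_zero _) hqC myQ_zero]
  -- x <• c k tends to x
  have hx_lim : Tendsto (fun k => x <• cfcₙ (fun s => myF (u k) s * myQ s) t) atTop (nhds x) := by
    rw [tendsto_iff_norm_sub_tendsto_zero]
    apply squeeze_zero (fun k => norm_nonneg _) (g := fun k => Real.sqrt (u k))
    · intro k
      set c : A := cfcₙ (fun s => myF (u k) s * myQ s) t with hc_def
      have hε := hu_pos k
      have hhC : ContinuousOn (fun s => myF (u k) s * myQ s) (quasispectrum ℝ t) :=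
        (myF_contOn hε hσ').mul hqC
      have hh0 : myF (u k) 0 * myQ 0 = 0 := by simp [myF_zero, myQ_zero]
      have hsa_c : IsSelfAdjoint c := cfcₙ_predicate _ t
      have hinner : ⟪x - x <• c, x - x <• c⟫ = t - t * c - c * t + c * (t * c) := by
        simp only [RightCStarModule.inner_sub_left, RightCStarModule.inner_sub_right,
          RightCStarModule.inner_op_smul_left, RightCStarModule.inner_op_smul_right, hsa_c.star_eq,
          ← ht_def]
        noncomm_ring
      have A1 : cfcₙ (fun s : ℝ => s * (myF (u k) s * myQ s)) t = t * c := by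
        rw [cfcₙ_mul _ _ t hidC rfl hhC hh0, cfcₙ_id' ℝ t htsa, hc_def]
      have A2 : cfcₙ (fun s : ℝ => (myF (u k) s * myQ s) * s) t = c * t := by
        rw [cfcₙ_mul _ _ t hhC hh0 hidC rfl, cfcₙ_id' ℝ t htsa, hc_def]
      have A3 : cfcₙ (fun s : ℝ => (myF (u k) s * myQ s) * (s * (myF (u k) s * myQ s))) t
          = c * (t * c) := by
        rw [cfcₙ_mul (fun s : ℝ => myF (u k) s * myQ s) (fun s : ℝ => s * (myF (u k) s * myQ s)) t hhC hh0 (hidC.mul hhC) (by simpa using hh0), A1, hc_def]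
      have hKC : cfcₙ (fun s : ℝ => s - s * (myF (u k) s * myQ s) - (myF (u k) s * myQ s) * s
          + (myF (u k) s * myQ s) * (s * (myF (u k) s * myQ s))) t
          = t - t * c - c * t + c * (t * c) := by
        rw [cfcₙ_add (fun s : ℝ => s - s * (myF (u k) s * myQ s) - (myF (u k) s * myQ s) * s) (fun s : ℝ => (myF (u k) s * myQ s) * (s * (myF (u k) s * myQ s))) t ((hidC.sub (hidC.mul hhC)).sub (hhC.mul hidC)) (by simp [hh0])
          (hhC.mul (hidC.mul hhC)) (by simp [hh0]),
          cfcₙ_sub (fun s : ℝ => s - s * (myF (u k) s * myQ s)) (fun s : ℝ => (myF (u k) s * myQ s) * s) t (hidC.sub (hidC.mul hhC)) (by simp [hh0]) (hhC.mul hidC)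
            (by simp [hh0]),
          cfcₙ_sub (fun s : ℝ => s) (fun s : ℝ => s * (myF (u k) s * myQ s)) t hidC rfl (hidC.mul hhC) (by simp [hh0]),
          cfcₙ_id' ℝ t htsa, A1, A2, A3]
      have hnorm2 : ‖x - x <• c‖ ^ 2 ≤ u k := by
        rw [RightCStarModule.norm_sq_eq (A := A), hinner, ← hKC]
        apply norm_cfcₙ_le
        intro s hs
        have hs0 := hσ s hs
        rw [Real.norm_eq_abs]
        exact my_key2 hs0 hε
      calc ‖x <• c - x‖ = ‖x - x <• c‖ := norm_sub_rev _ _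
        _ = Real.sqrt (‖x - x <• c‖ ^ 2) := (Real.sqrt_sq (norm_nonneg _)).symm
        _ ≤ Real.sqrt (u k) := Real.sqrt_le_sqrt hnorm2
    · have h1 : Tendsto u atTop (nhds 0) := tendsto_one_div_add_atTop_nhds_zero_nat
      have := (Real.continuous_sqrt.tendsto' 0 0 (by simp)).comp h1
      simpa [Function.comp_def] using this
  -- y k <• a tends to ylim <• a
  have hy_lim : Tendsto (fun k => y k <• cfcₙ myQ t) atTop (nhds (ylim <• cfcₙ myQ t)) := by
    rw [tendsto_iff_norm_sub_tendsto_zero]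
    apply squeeze_zero (fun k => norm_nonneg _)
      (g := fun k => ‖cfcₙ myQ t‖ * ‖y k - ylim‖)
    · intro k
      rw [← my_sub_op_smul]
      exact my_norm_op_smul_le _ _
    · have h1 : Tendsto (fun k => ‖y k - ylim‖) atTop (nhds 0) :=
        tendsto_iff_norm_sub_tendsto_zero.mp hylim
      simpa using h1.const_mul ‖cfcₙ myQ t‖
  have : Tendsto (fun k => y k <• cfcₙ myQ t) atTop (nhds x) := by
    simp only [hc]
    exact hx_lim
  exact tendsto_nhds_unique this hy_lim

end factor


/-- If a Hilbert `A`-module `H` is algebraically finitely generated over the minimal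
unitization `Ã`, i.e. `H = ξ₁·Ã + ⋯ + ξₙ·Ã` (every element is a sum of scalar multiples
`λᵢ • ξᵢ` and module multiples `ξᵢ · aᵢ` with `aᵢ ∈ A`), then there exist `y₁, …, yₙ ∈ H`
with `H = {∑ᵢ yᵢ·aᵢ : aᵢ ∈ A}`, i.e. `H` is algebraically generated using only elements
of `A`. -/
theorem stmt5 {A E : Type*} [NonUnitalCStarAlgebra A] [PartialOrder A] [StarOrderedRing A]
    [NormedAddCommGroup E] [NormedSpace ℂ E] [SMul Aᵐᵒᵖ E] [RightCStarModule A E] [CompleteSpace E]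
    {n : ℕ} (ξ : Fin n → E)
    (hgen : ∀ h : E, ∃ (c : Fin n → ℂ) (a : Fin n → A),
      h = ∑ i, (c i • ξ i + ξ i <• a i)) :
    ∃ y : Fin n → E, ∀ h : E, ∃ a : Fin n → A, h = ∑ i, y i <• a i := by
  choose y b hfac using fun i => my_factor (A := A) (ξ i)
  refine ⟨y, fun h => ?_⟩
  obtain ⟨c, a, rfl⟩ := hgen h
  refine ⟨fun i => c i • b i + b i * a i, ?_⟩
  apply Finset.sum_congr rfl
  intro i _
  rw [hfac i, my_smul_op_smul, my_op_smul_mul, ← my_op_smul_add]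
end

section
/- Let A be a C*-algebra and H an algebraically finitely generated Hilbert A-module. Then K(H) is unital and H is self-dual, i.e., every bounded A-module map f : H → A is of the form f(x) = ⟨y, x⟩ for some y ∈ H. -/
set_option linter.unusedSectionVars false
set_option synthInstance.maxHeartbeats 1000000
set_option maxHeartbeats 1000000

open scoped RightActions

noncomputable section

/-- The Hilbert C⋆-module class as it stood in the older Mathlib: a right `A`-module
(action of `Aᵐᵒᵖ`) with an `A`-valued inner product, linear in the second argument. -/
class CStarModuleRight (A E : Type*) [NonUnitalSemiring A] [StarRing A]
    [Module ℂ A] [AddCommGroup E] [Module ℂ E] [PartialOrder A] [SMul Aᵐᵒᵖ E] [Norm A] [Norm E]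
    extends Inner A E where
  inner_add_right {x} {y} {z} : inner x (y + z) = inner x y + inner x z
  inner_self_nonneg {x} : 0 ≤ inner x x
  inner_self {x} : inner x x = 0 ↔ x = 0
  inner_op_smul_right {a : A} {x y : E} : inner x (y <• a) = inner x y * a
  inner_smul_right_complex {z : ℂ} {x} {y} : inner x (z • y) = z • inner x y
  star_inner x y : star (inner x y) = inner y x
  norm_eq_sqrt_norm_inner_self x : ‖x‖ = √‖inner x x‖

/-- The C*-algebra `K(H)` of "compact" operators on a Hilbert `A`-module `H`. -/
def compactOperators (A E : Type*) [NonUnitalCStarAlgebra A] [PartialOrder A]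
    [StarOrderedRing A] [NormedAddCommGroup E] [NormedSpace ℂ E] [SMul Aᵐᵒᵖ E]
    [CStarModuleRight A E] : Set (E →L[ℂ] E) :=
  closure (Submodule.span ℂ
    {T : E →L[ℂ] E | ∃ x y : E, ∀ z, T z = x <• (inner A y z : A)} : Set (E →L[ℂ] E))

namespace Stmt9Aux

variable {A E : Type*} [NonUnitalCStarAlgebra A] [PartialOrder A] [StarOrderedRing A]
  [NormedAddCommGroup E] [NormedSpace ℂ E] [SMul Aᵐᵒᵖ E] [CStarModuleRight A E]

local notation "⟪" x ", " y "⟫" => (inner A x y : A)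

namespace CSM

@[simp] lemma inner_add_right {x y z : E} : inner A x (y + z) = inner A x y + inner A x z :=
  CStarModuleRight.inner_add_right
lemma inner_self {x : E} : inner A x x = 0 ↔ x = 0 := CStarModuleRight.inner_self
lemma inner_self_nonneg {x : E} : 0 ≤ inner A x x := CStarModuleRight.inner_self_nonneg
@[simp] lemma inner_op_smul_right {a : A} {x y : E} : inner A x (y <• a) = inner A x y * a :=
  CStarModuleRight.inner_op_smul_right
@[simp] lemma inner_smul_right_complex {z : ℂ} {x y : E} :
    inner A x (z • y) = z • inner A x y := CStarModuleRight.inner_smul_right_complex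
@[simp] lemma star_inner (x y : E) : star (inner A x y) = inner A y x :=
  CStarModuleRight.star_inner x y

@[simp] lemma inner_add_left {x y z : E} : inner A (x + y) z = inner A x z + inner A y z := by
  rw [← star_star (r := inner A (x + y) z)]
  simp only [star_inner, inner_add_right, star_add]

@[simp] lemma inner_op_smul_left {a : A} {x y : E} : inner A (x <• a) y = star a * inner A x y := by
  rw [← star_inner]; simp

@[simp] lemma inner_smul_left_complex {z : ℂ} {x y : E} :
    inner A (z • x) y = star z • inner A x y := by
  rw [← star_inner]; simp

@[simp] lemma inner_smul_left_real {z : ℝ} {x y : E} : inner A (z • x) y = z • inner A x y := by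
  have h₁ : z • x = (z : ℂ) • x := by simp
  rw [h₁, ← star_inner, inner_smul_right_complex]
  simp

@[simp] lemma inner_smul_right_real {z : ℝ} {x y : E} : inner A x (z • y) = z • inner A x y := by
  have h₁ : z • y = (z : ℂ) • y := by simp
  rw [h₁, ← star_inner, inner_smul_left_complex]
  simp

variable (A) in
def innerₛₗ : E →ₗ⋆[ℂ] E →ₗ[ℂ] A where
  toFun x := { toFun := fun y => inner A x y
               map_add' := fun z y => by simp
               map_smul' := fun z y => by simp }
  map_add' z y := by ext; simp
  map_smul' z y := by ext; simp

lemma innerₛₗ_apply {x y : E} : innerₛₗ A x y = inner A x y := rfl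

@[simp] lemma inner_sub_right {x y z : E} : inner A x (y - z) = inner A x y - inner A x z := by
  simp [← innerₛₗ_apply]
@[simp] lemma inner_sub_left {x y z : E} : inner A (x - y) z = inner A x z - inner A y z := by
  simp [← innerₛₗ_apply]

lemma inner_sum_right {ι : Type*} {s : Finset ι} {x : E} {y : ι → E} :
    inner A x (∑ i ∈ s, y i) = ∑ i ∈ s, inner A x (y i) :=
  map_sum (innerₛₗ A x) ..

lemma inner_sum_left {ι : Type*} {s : Finset ι} {x : ι → E} {y : E} :
    inner A (∑ i ∈ s, x i) y = ∑ i ∈ s, inner A (x i) y :=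
  map_sum ((innerₛₗ A).flip y) ..

lemma norm_sq_eq {x : E} : ‖x‖ ^ 2 = ‖inner A x x‖ := by
  rw [CStarModuleRight.norm_eq_sqrt_norm_inner_self (A := A) x, Real.sq_sqrt (norm_nonneg _)]

lemma inner_mul_inner_swap_le {x y : E} :
    inner A y x * inner A x y ≤ ‖x‖ ^ 2 • inner A y y := by
  rcases eq_or_ne x 0 with h | h
  · subst h
    have : inner A (0 : E) y = 0 := by simpa using (inner_sub_left (A := A) (x := (0:E)) (y := 0) (z := y))
    simp [this]
  · have h₁ : ∀ (a : A),
        (0 : A) ≤ ‖x‖ ^ 2 • (star a * a) - ‖x‖ ^ 2 • (star a * inner A x y)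
                  - ‖x‖ ^ 2 • (inner A y x * a) + ‖x‖ ^ 2 • (‖x‖ ^ 2 • inner A y y) := fun a => by
      calc (0 : A)
            ≤ inner A (x <• a - ‖x‖ ^ 2 • y) (x <• a - ‖x‖ ^ 2 • y) := by
                      exact inner_self_nonneg
            _ = star a * inner A x x * a - ‖x‖ ^ 2 • (star a * inner A x y)
                  - ‖x‖ ^ 2 • (inner A y x * a) + ‖x‖ ^ 2 • (‖x‖ ^ 2 • inner A y y) := by
                      simp only [inner_sub_right, inner_op_smul_right, inner_sub_left,
                        inner_op_smul_left, inner_smul_left_real, mul_sub, mul_smul_comm,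
                        smul_mul_assoc, inner_smul_right_real, smul_sub, sub_mul, mul_assoc]
                      abel
            _ ≤ ‖x‖ ^ 2 • (star a * a) - ‖x‖ ^ 2 • (star a * inner A x y)
                  - ‖x‖ ^ 2 • (inner A y x * a) + ‖x‖ ^ 2 • (‖x‖ ^ 2 • inner A y y) := by
                      gcongr
                      calc _ ≤ ‖inner A x x‖ • (star a * a) :=
                          CStarAlgebra.star_left_conjugate_le_norm_smul (star_inner x x)
                        _ = ‖x‖ ^ 2 • (star a * a) := by rw [norm_sq_eq (A := A)]
    specialize h₁ (inner A x y)
    simp only [star_inner, sub_self, zero_sub, le_neg_add_iff_add_le, add_zero] at h₁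
    rwa [smul_le_smul_iff_of_pos_left (pow_pos (norm_pos_iff.mpr h) _)] at h₁

variable (E) in
lemma norm_inner_le {x y : E} : ‖inner A x y‖ ≤ ‖x‖ * ‖y‖ := by
  have := calc ‖inner A x y‖ ^ 2 = ‖inner A y x * inner A x y‖ := by
                rw [← star_inner x, CStarRing.norm_star_mul_self, pow_two]
    _ ≤ ‖‖x‖ ^ 2 • inner A y y‖ := by
                refine CStarAlgebra.norm_le_norm_of_nonneg_of_le ?_ inner_mul_inner_swap_le
                rw [← star_inner x]
                exact star_mul_self_nonneg _
    _ = ‖x‖ ^ 2 * ‖inner A y y‖ := by simp [norm_smul]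
    _ = ‖x‖ ^ 2 * ‖y‖ ^ 2 := by rw [norm_sq_eq (A := A) (x := y)]
    _ = (‖x‖ * ‖y‖) ^ 2 := by simp only [mul_pow]
  refine (pow_le_pow_iff_left₀ (norm_nonneg _) ?_ (by simp)).mp this
  positivity

variable (A) in
def innerSL : E →L⋆[ℂ] E →L[ℂ] A :=
  LinearMap.mkContinuous₂ (innerₛₗ A : E →ₗ⋆[ℂ] E →ₗ[ℂ] A) 1 <| fun x y => by
    simp [innerₛₗ_apply, norm_inner_le E]

lemma innerSL_apply {x y : E} : innerSL A x y = inner A x y := rfl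

lemma continuous_inner : Continuous (fun x : E × E => inner A x.1 x.2) := by
  simp_rw [← innerSL_apply]
  fun_prop

end CSM

lemma ext_inner {u v : E} (h : ∀ y : E, ⟪y, u⟫ = ⟪y, v⟫) : u = v := by
  have h2 : ⟪u - v, u - v⟫ = 0 := by
    rw [CSM.inner_sub_right, h (u - v), sub_self]
  simpa [sub_eq_zero] using CSM.inner_self.mp h2

lemma op_smul_add (x : E) (a b : A) : x <• (a + b) = x <• a + x <• b :=
  ext_inner fun y => by
    rw [CSM.inner_op_smul_right, CSM.inner_add_right,
      CSM.inner_op_smul_right, CSM.inner_op_smul_right, mul_add]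

lemma op_smul_smul (c : ℂ) (x : E) (a : A) : x <• (c • a) = c • (x <• a) :=
  ext_inner fun y => by
    rw [CSM.inner_op_smul_right, CSM.inner_smul_right_complex,
      CSM.inner_op_smul_right, mul_smul_comm]

lemma norm_op_smul_le (x : E) (a : A) : ‖x <• a‖ ≤ ‖x‖ * ‖a‖ := by
  refine (pow_le_pow_iff_left₀ (norm_nonneg _) (by positivity) two_ne_zero).mp ?_
  rw [CSM.norm_sq_eq (A := A)]
  calc ‖⟪x <• a, x <• a⟫‖ = ‖star a * ⟪x, x⟫ * a‖ := by simp [mul_assoc]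
    _ ≤ ‖star a‖ * ‖⟪x, x⟫‖ * ‖a‖ := by
        refine (norm_mul_le _ _).trans ?_
        gcongr
        exact norm_mul_le _ _
    _ = ‖x‖ ^ 2 * ‖a‖ ^ 2 := by rw [norm_star, ← CSM.norm_sq_eq (A := A)]; ring
    _ = (‖x‖ * ‖a‖) ^ 2 := by ring

variable (A) in
/-- The rank-one operator `z ↦ x <• ⟪y, z⟫`. -/
def rankOne (x y : E) : E →L[ℂ] E :=
  LinearMap.mkContinuous
    { toFun := fun z => x <• (⟪y, z⟫)
      map_add' := fun z w => by
        show x <• (⟪y, z + w⟫) = x <• (⟪y, z⟫) + x <• (⟪y, w⟫)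
        rw [CSM.inner_add_right, op_smul_add]
      map_smul' := fun c z => by
        show x <• (⟪y, c • z⟫) = c • (x <• (⟪y, z⟫))
        rw [CSM.inner_smul_right_complex, op_smul_smul] }
    (‖x‖ * ‖y‖) fun z => by
      calc ‖x <• ⟪y, z⟫‖ ≤ ‖x‖ * ‖⟪y, z⟫‖ := norm_op_smul_le _ _
        _ ≤ ‖x‖ * (‖y‖ * ‖z‖) := by gcongr; exact CSM.norm_inner_le E
        _ = ‖x‖ * ‖y‖ * ‖z‖ := by ring

@[simp] lemma rankOne_apply (x y z : E) : rankOne A x y z = x <• (⟪y, z⟫) := rfl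

variable (A) in
/-- `S` is an adjoint of `T`. -/
def IsAdj (T S : E →L[ℂ] E) : Prop := ∀ x y : E, ⟪S x, y⟫ = ⟪x, T y⟫

lemma IsAdj.symm {T S : E →L[ℂ] E} (h : IsAdj A T S) : IsAdj A S T := fun x y => by
  have := h y x
  calc ⟪T x, y⟫ = star ⟪y, T x⟫ := by simp
    _ = star ⟪S y, x⟫ := by rw [this]
    _ = ⟪x, S y⟫ := by simp

lemma IsAdj.unique {T S₁ S₂ : E →L[ℂ] E} (h1 : IsAdj A T S₁) (h2 : IsAdj A T S₂) : S₁ = S₂ := by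
  ext x
  refine ext_inner (A := A) fun y => ?_
  calc ⟪y, S₁ x⟫ = star ⟪S₁ x, y⟫ := by simp
    _ = star ⟪S₂ x, y⟫ := by rw [h1, h2]
    _ = ⟪y, S₂ x⟫ := by simp

lemma IsAdj.norm_le {T S : E →L[ℂ] E} (h : IsAdj A T S) : ‖S‖ ≤ ‖T‖ := by
  refine ContinuousLinearMap.opNorm_le_bound _ (norm_nonneg T) fun x => ?_
  rcases eq_or_lt_of_le (norm_nonneg (S x)) with h0 | h0
  · rw [← h0]; positivity
  · have key : ‖S x‖ ^ 2 ≤ ‖T‖ * ‖x‖ * ‖S x‖ := by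
      rw [CSM.norm_sq_eq (A := A), h x (S x)]
      calc ‖⟪x, T (S x)⟫‖ ≤ ‖x‖ * ‖T (S x)‖ := CSM.norm_inner_le E
        _ ≤ ‖x‖ * (‖T‖ * ‖S x‖) := by gcongr; exact T.le_opNorm _
        _ = ‖T‖ * ‖x‖ * ‖S x‖ := by ring
    nlinarith

lemma isAdj_rankOne (x y : E) : IsAdj A (rankOne A x y) (rankOne A y x) := fun u v => by
  rw [rankOne_apply, rankOne_apply, CSM.inner_op_smul_left,
    CSM.inner_op_smul_right, CSM.star_inner]

variable (A E) in
/-- The subalgebra of adjointable operators on a Hilbert C⋆-module. -/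
def adjAlg : Subalgebra ℂ (E →L[ℂ] E) where
  carrier := {T | ∃ S, IsAdj A T S}
  mul_mem' := by
    rintro T₁ T₂ ⟨S₁, h1⟩ ⟨S₂, h2⟩
    refine ⟨S₂.comp S₁, fun x y => ?_⟩
    calc ⟪S₂ (S₁ x), y⟫ = ⟪S₁ x, T₂ y⟫ := h2 _ _
      _ = ⟪x, T₁ (T₂ y)⟫ := h1 _ _
  add_mem' := by
    rintro T₁ T₂ ⟨S₁, h1⟩ ⟨S₂, h2⟩
    refine ⟨S₁ + S₂, fun x y => ?_⟩
    simp only [ContinuousLinearMap.add_apply, CSM.inner_add_left,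
      CSM.inner_add_right]
    rw [h1 x y, h2 x y]
  algebraMap_mem' := by
    intro c
    refine ⟨(starRingEnd ℂ c) • 1, fun x y => ?_⟩
    simp [Algebra.algebraMap_eq_smul_one]


section withComplete

variable [CompleteSpace E]

lemma mem_adjAlg_iff {T : E →L[ℂ] E} : T ∈ adjAlg A E ↔ ∃ S, IsAdj A T S := Iff.rfl

/-- The adjoint of an adjointable operator. -/
def adjCLM (a : ↥(adjAlg A E)) : E →L[ℂ] E := (mem_adjAlg_iff.mp a.2).choose

lemma isAdj_adjCLM (a : ↥(adjAlg A E)) : IsAdj A a.1 (adjCLM a) :=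
  (mem_adjAlg_iff.mp a.2).choose_spec

instance : Star ↥(adjAlg A E) := ⟨fun a => ⟨adjCLM a, ⟨a.1, (isAdj_adjCLM a).symm⟩⟩⟩

lemma isAdj_star (a : ↥(adjAlg A E)) : IsAdj A a.1 (star a).1 := isAdj_adjCLM a

lemma star_inner_left (a : ↥(adjAlg A E)) (x y : E) :
    ⟪(star a).1 x, y⟫ = ⟪x, a.1 y⟫ := isAdj_star a x y

lemma inner_star_right (a : ↥(adjAlg A E)) (x y : E) :
    ⟪a.1 x, y⟫ = ⟪x, (star a).1 y⟫ := (isAdj_star a).symm x y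

instance : StarRing ↥(adjAlg A E) where
  star_involutive a :=
    Subtype.ext <| IsAdj.unique (isAdj_star (star a)) (isAdj_star a).symm
  star_mul a b := by
    refine Subtype.ext <| IsAdj.unique (isAdj_star (a * b)) (fun x y => ?_)
    show ⟪(star b).1 ((star a).1 x), y⟫ = ⟪x, (a.1 * b.1) y⟫
    rw [ContinuousLinearMap.mul_apply, star_inner_left, star_inner_left]
  star_add a b := by
    refine Subtype.ext <| IsAdj.unique (isAdj_star (a + b)) (fun x y => ?_)
    show ⟪((star a).1 + (star b).1) x, y⟫ = ⟪x, (a.1 + b.1) y⟫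
    simp only [ContinuousLinearMap.add_apply, CSM.inner_add_left,
      CSM.inner_add_right]
    rw [star_inner_left, star_inner_left]

instance : StarModule ℂ ↥(adjAlg A E) where
  star_smul c a := by
    refine Subtype.ext <| IsAdj.unique (isAdj_star (c • a)) (fun x y => ?_)
    show ⟪(star c • (star a).1) x, y⟫ = ⟪x, (c • a.1) y⟫
    rw [ContinuousLinearMap.smul_apply, ContinuousLinearMap.smul_apply,
      CSM.inner_smul_left_complex, star_inner_left, star_star,
      CSM.inner_smul_right_complex]

lemma isClosed_adjAlg : IsClosed ((adjAlg A E : Set (E →L[ℂ] E))) := by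
  refine IsSeqClosed.isClosed fun Tseq T hmem hlim => ?_
  choose S hS using hmem
  have hdiff : ∀ m k, IsAdj A (Tseq m - Tseq k) (S m - S k) := fun m k x y => by
    simp only [ContinuousLinearMap.sub_apply, CSM.inner_sub_left,
      CSM.inner_sub_right]
    rw [hS m x y, hS k x y]
  have hcauchy : CauchySeq S := by
    rw [Metric.cauchySeq_iff]
    have hT := Metric.cauchySeq_iff.mp hlim.cauchySeq
    intro ε hε
    obtain ⟨N, hN⟩ := hT ε hε
    refine ⟨N, fun m hm k hk => lt_of_le_of_lt ?_ (hN m hm k hk)⟩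
    rw [dist_eq_norm, dist_eq_norm]
    exact (hdiff m k).norm_le
  obtain ⟨Slim, hSlim⟩ := cauchySeq_tendsto_of_complete hcauchy
  refine ⟨Slim, fun x y => ?_⟩
  have hinl : Continuous fun u : E => ⟪u, y⟫ :=
    CSM.continuous_inner.comp (continuous_id.prodMk continuous_const)
  have hinr : Continuous fun u : E => ⟪x, u⟫ :=
    CSM.continuous_inner.comp (continuous_const.prodMk continuous_id)
  have h1 : Filter.Tendsto (fun m => ⟪S m x, y⟫) Filter.atTop (nhds ⟪Slim x, y⟫) :=
    (hinl.tendsto _).comp (((ContinuousLinearMap.apply ℂ E x).continuous.tendsto _).comp hSlim)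
  have h2 : Filter.Tendsto (fun m => ⟪x, Tseq m y⟫) Filter.atTop (nhds ⟪x, T y⟫) :=
    (hinr.tendsto _).comp (((ContinuousLinearMap.apply ℂ E y).continuous.tendsto _).comp hlim)
  exact tendsto_nhds_unique (h1.congr fun m => hS m x y) h2

instance : CompleteSpace ↥(adjAlg A E) := isClosed_adjAlg.completeSpace_coe

noncomputable instance : CStarAlgebra ↥(adjAlg A E) where
  norm_mul_self_le a := by
    have hM : (0:ℝ) ≤ ‖star a * a‖ := norm_nonneg _
    have h1 : ‖(a.1 : E →L[ℂ] E)‖ ≤ Real.sqrt ‖star a * a‖ := by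
      refine ContinuousLinearMap.opNorm_le_bound _ (Real.sqrt_nonneg _) fun v => ?_
      refine (pow_le_pow_iff_left₀ (norm_nonneg _) (by positivity) two_ne_zero).mp ?_
      have : ⟪a.1 v, a.1 v⟫ = ⟪v, ((star a * a : ↥(adjAlg A E)) : E →L[ℂ] E) v⟫ := by
        rw [inner_star_right]; rfl
      calc ‖a.1 v‖ ^ 2 = ‖⟪a.1 v, a.1 v⟫‖ := CSM.norm_sq_eq
        _ = ‖⟪v, ((star a * a : ↥(adjAlg A E)) : E →L[ℂ] E) v⟫‖ := by rw [this]
        _ ≤ ‖v‖ * ‖((star a * a : ↥(adjAlg A E)) : E →L[ℂ] E) v‖ := CSM.norm_inner_le E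
        _ ≤ ‖v‖ * (‖star a * a‖ * ‖v‖) := by
            gcongr
            exact ContinuousLinearMap.le_opNorm _ _
        _ = (Real.sqrt ‖star a * a‖ * ‖v‖) ^ 2 := by
            rw [mul_pow, Real.sq_sqrt hM]; ring
    calc ‖a‖ * ‖a‖ = ‖(a.1 : E →L[ℂ] E)‖ * ‖(a.1 : E →L[ℂ] E)‖ := rfl
      _ ≤ Real.sqrt ‖star a * a‖ * Real.sqrt ‖star a * a‖ := by
          gcongr <;> exact h1
      _ = ‖star a * a‖ := Real.mul_self_sqrt hM


lemma isUnit_of_inner_lower_bound {T : ↥(adjAlg A E)} (hT : IsSelfAdjoint T)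
    {c : ℝ} (hc : 0 < c)
    (hbd : ∀ x : E, c * ‖x‖ ^ 2 ≤ ‖⟪x, (T : E →L[ℂ] E) x⟫‖) : IsUnit T := by
  rcases subsingleton_or_nontrivial E with hE | hE
  · exact isUnit_of_subsingleton T
  haveI : NormOneClass ↥(adjAlg A E) := ⟨by
    show ‖((1 : ↥(adjAlg A E)) : E →L[ℂ] E)‖ = 1
    rw [OneMemClass.coe_one]
    exact ContinuousLinearMap.norm_id⟩
  by_contra hunit
  have h0 : (0 : ℝ) ∈ spectrum ℝ T := (spectrum.zero_mem_iff ℝ).mpr hunit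
  set δ : ℝ := c / 8 with hδ
  have hδpos : 0 < δ := by positivity
  set f : ℝ → ℝ := fun t => max (1 - |t| / δ) 0 with hfdef
  have hfc : Continuous f :=
    (continuous_const.sub (continuous_abs.div_const δ)).max continuous_const
  set g := cfc f T with hgdef
  have hg_sa : IsSelfAdjoint g := cfc_predicate f T
  have h1g : (1 : ℝ) ∈ spectrum ℝ g := by
    rw [hgdef, cfc_map_spectrum f T hT hfc.continuousOn]
    exact ⟨0, h0, by simp [hfdef]⟩
  have hgnorm : (1 : ℝ) ≤ ‖g‖ := by
    have h := spectrum.norm_le_norm_of_mem h1g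
    simp at h
    exact h
  have hcomm : g * T = T * g := by
    have := cfc_commute_cfc f id T
    rw [cfc_id ℝ T hT] at this
    exact this.eq
  have hTgg : T * (g * g) = cfc (fun t : ℝ => t * (f t * f t)) T := by
    rw [cfc_mul (fun t : ℝ => t) (fun t => f t * f t) T continuousOn_id
      ((hfc.mul hfc).continuousOn),
      cfc_mul f f T hfc.continuousOn hfc.continuousOn, cfc_id' ℝ T hT, ← hgdef]
  have hnorm_small : ‖T * (g * g)‖ ≤ δ := by
    rw [hTgg]
    refine norm_cfc_le hδpos.le fun t ht => ?_
    rcases le_or_gt |t| δ with h | h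
    · have hf0 : 0 ≤ f t := le_max_right _ _
      have hf1 : f t ≤ 1 := by
        refine max_le ?_ (by norm_num)
        have : 0 ≤ |t| / δ := by positivity
        linarith
      have : ‖t * (f t * f t)‖ = |t| * (f t * f t) := by
        rw [Real.norm_eq_abs, abs_mul, abs_mul, abs_of_nonneg hf0]
      rw [this]
      calc |t| * (f t * f t) ≤ δ * (1 * 1) := by
            apply mul_le_mul h (by nlinarith) (by positivity) hδpos.le
        _ = δ := by ring
    · have hft : f t = 0 := by
        refine max_eq_right ?_
        rw [sub_nonpos, le_div_iff₀ hδpos]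
        nlinarith
      simp [hft, hδpos.le]
  have hgco : ‖g‖ = ‖(g : E →L[ℂ] E)‖ := rfl
  have hgop : ¬ (∀ y : E, ‖(g : E →L[ℂ] E) y‖ ≤ 2⁻¹ * ‖y‖) := by
    intro hcon
    have h2 : ‖(g : E →L[ℂ] E)‖ ≤ 2⁻¹ :=
      ContinuousLinearMap.opNorm_le_bound _ (by norm_num) hcon
    rw [← hgco] at h2
    linarith
  push_neg at hgop
  obtain ⟨y, hy⟩ := hgop
  have hyne : 0 < ‖y‖ := by
    rcases eq_or_lt_of_le (norm_nonneg y) with h | h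
    · exfalso
      have hy0 : y = 0 := by rwa [eq_comm, norm_eq_zero] at h
      rw [hy0] at hy
      simp at hy
    · exact h
  set z := (g : E →L[ℂ] E) y with hzdef
  have hz : ‖y‖ / 2 < ‖z‖ := by
    rw [div_eq_inv_mul]
    exact hy
  have hmul : g * (T * g) = T * (g * g) := by
    rw [← mul_assoc, hcomm, mul_assoc]
  have hinner : (⟪z, (T : E →L[ℂ] E) z⟫) =
      ⟪y, ((T * (g * g) : ↥(adjAlg A E)) : E →L[ℂ] E) y⟫ := by
    rw [hzdef]
    have e1 := inner_star_right g y ((T : E →L[ℂ] E) ((g : E →L[ℂ] E) y))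
    rw [hg_sa.star_eq] at e1
    rw [e1, ← hmul]
    rfl
  have hup : ‖(⟪z, (T : E →L[ℂ] E) z⟫)‖ ≤ δ * ‖y‖ ^ 2 := by
    rw [hinner]
    calc ‖(⟪y, ((T * (g * g) : ↥(adjAlg A E)) : E →L[ℂ] E) y⟫)‖
        ≤ ‖y‖ * ‖((T * (g * g) : ↥(adjAlg A E)) : E →L[ℂ] E) y‖ := CSM.norm_inner_le E
      _ ≤ ‖y‖ * (‖T * (g * g)‖ * ‖y‖) := by
          gcongr
          exact ContinuousLinearMap.le_opNorm _ _
      _ ≤ ‖y‖ * (δ * ‖y‖) := by gcongr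
      _ = δ * ‖y‖ ^ 2 := by ring
  have hlow := hbd z
  have hz2 : (‖y‖ / 2) ^ 2 < ‖z‖ ^ 2 := by
    apply pow_lt_pow_left₀ hz (by positivity) two_ne_zero
  have hy2 : 0 < ‖y‖ ^ 2 := by positivity
  nlinarith [mul_lt_mul_of_pos_left hz2 hc]


/-- A rank-one operator as an element of the adjointable operators. -/
def rankOneA (x y : E) : ↥(adjAlg A E) := ⟨rankOne A x y, ⟨rankOne A y x, isAdj_rankOne x y⟩⟩

@[simp] lemma rankOneA_coe (x y : E) :
    ((rankOneA x y : ↥(adjAlg A E)) : E →L[ℂ] E) = rankOne A x y := rfl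

lemma star_rankOneA (x y : E) : star (rankOneA (A := A) x y) = rankOneA y x :=
  Subtype.ext <| IsAdj.unique (A := A) (isAdj_star (rankOneA x y)) (isAdj_rankOne x y)

end withComplete


end Stmt9Aux

open Stmt9Aux in
/-- (L. Robert) If a Hilbert `A`-module `H` is algebraically finitely generated (over the
minimal unitization `Ã`), then `K(H)` is unital and `H` is self-dual: every bounded
`A`-module map `f : H → A` is of the form `f(x) = ⟪y, x⟫` for some `y ∈ H`. -/
theorem stmt9 {A E : Type*} [NonUnitalCStarAlgebra A] [PartialOrder A] [StarOrderedRing A]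
    [NormedAddCommGroup E] [NormedSpace ℂ E] [SMul Aᵐᵒᵖ E] [CStarModuleRight A E]
    [CompleteSpace E]
    {n : ℕ} (ξ : Fin n → E)
    (hgen : ∀ h : E, ∃ (c : Fin n → ℂ) (a : Fin n → A),
      h = ∑ i, (c i • ξ i + ξ i <• a i)) :
    (∃ e ∈ compactOperators A E, ∀ T ∈ compactOperators A E, e * T = T ∧ T * e = T) ∧
    (∀ f : E →L[ℂ] A, (∀ (x : E) (a : A), f (x <• a) = f x * a) →
      ∃ y : E, ∀ x : E, f x = (inner A y x : A)) := by
  classical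
  -- the coefficient-evaluation map
  let Φlin : ((Fin n → ℂ) × (Fin n → A)) →ₗ[ℂ] E :=
    { toFun := fun p => ∑ i, (p.1 i • ξ i + ξ i <• p.2 i)
      map_add' := fun p q => by
        rw [← Finset.sum_add_distrib]
        refine Finset.sum_congr rfl fun i _ => ?_
        show (p.1 i + q.1 i) • ξ i + ξ i <• (p.2 i + q.2 i) = _
        rw [op_smul_add, add_smul]
        abel
      map_smul' := fun c p => by
        show ∑ i, ((c • p.1) i • ξ i + ξ i <• (c • p.2) i)
          = c • ∑ i, (p.1 i • ξ i + ξ i <• p.2 i)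
        rw [Finset.smul_sum]
        refine Finset.sum_congr rfl fun i _ => ?_
        show (c * p.1 i) • ξ i + ξ i <• (c • p.2 i) = c • (p.1 i • ξ i + ξ i <• p.2 i)
        rw [op_smul_smul, smul_add, mul_smul] }
  have Φbound : ∀ p : (Fin n → ℂ) × (Fin n → A),
      ‖Φlin p‖ ≤ (∑ i, 2 * ‖ξ i‖) * ‖p‖ := by
    intro p
    calc ‖∑ i, (p.1 i • ξ i + ξ i <• p.2 i)‖ ≤ ∑ i, ‖p.1 i • ξ i + ξ i <• p.2 i‖ :=
          norm_sum_le _ _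
      _ ≤ ∑ i, 2 * ‖ξ i‖ * ‖p‖ := by
          refine Finset.sum_le_sum fun i _ => ?_
          calc ‖p.1 i • ξ i + ξ i <• p.2 i‖ ≤ ‖p.1 i • ξ i‖ + ‖ξ i <• p.2 i‖ := norm_add_le _ _
            _ ≤ ‖p.1 i‖ * ‖ξ i‖ + ‖ξ i‖ * ‖p.2 i‖ := by
                rw [norm_smul]
                gcongr
                exact norm_op_smul_le _ _
            _ ≤ ‖p‖ * ‖ξ i‖ + ‖ξ i‖ * ‖p‖ := by
                gcongr
                · exact le_trans (norm_le_pi_norm p.1 i) (norm_fst_le p)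
                · exact le_trans (norm_le_pi_norm p.2 i) (norm_snd_le p)
            _ = 2 * ‖ξ i‖ * ‖p‖ := by ring
      _ = (∑ i, 2 * ‖ξ i‖) * ‖p‖ := (Finset.sum_mul _ _ _).symm
  let Φ : ((Fin n → ℂ) × (Fin n → A)) →L[ℂ] E := Φlin.mkContinuous _ Φbound
  have Φsurj : Function.Surjective Φ := by
    intro y
    obtain ⟨c, a, h⟩ := hgen y
    exact ⟨(c, a), h.symm⟩
  obtain ⟨C, hCpos, hC⟩ := ContinuousLinearMap.exists_preimage_norm_le Φ Φsurj
  -- the operator T = ∑ θ_{ξ i, ξ i}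
  set TB : ↥(adjAlg A E) := ∑ i, rankOneA (ξ i) (ξ i) with hTBdef
  have hTBsa : IsSelfAdjoint TB := by
    show star TB = TB
    rw [hTBdef, star_sum]
    exact Finset.sum_congr rfl fun i _ => star_rankOneA _ _
  have hTBapp : ∀ w : E, (TB : E →L[ℂ] E) w = ∑ i, ξ i <• (inner A (ξ i) w : A) := by
    intro w
    have hcoe : ((TB : ↥(adjAlg A E)) : E →L[ℂ] E) = ∑ i, rankOne A (ξ i) (ξ i) := by
      rw [hTBdef]
      exact AddSubmonoidClass.coe_finset_sum _ _
    rw [hcoe, ContinuousLinearMap.sum_apply]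
    rfl
  have hinnerT : ∀ x : E, (inner A x ((TB : E →L[ℂ] E) x) : A)
      = ∑ i, star (inner A (ξ i) x : A) * (inner A (ξ i) x : A) := by
    intro x
    rw [hTBapp, CSM.inner_sum_right]
    refine Finset.sum_congr rfl fun i _ => ?_
    rw [CSM.inner_op_smul_right, CSM.star_inner]
  have hterm : ∀ (x : E) (i : Fin n),
      ‖(inner A (ξ i) x : A)‖ ^ 2 ≤ ‖(inner A x ((TB : E →L[ℂ] E) x) : A)‖ := by
    intro x i
    have h1 : star (inner A (ξ i) x : A) * (inner A (ξ i) x : A)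
        ≤ ∑ j, star (inner A (ξ j) x : A) * (inner A (ξ j) x : A) :=
      Finset.single_le_sum (f := fun j => star (inner A (ξ j) x : A) * (inner A (ξ j) x : A))
        (fun j _ => star_mul_self_nonneg _) (Finset.mem_univ i)
    have h2 := CStarAlgebra.norm_le_norm_of_nonneg_of_le (star_mul_self_nonneg _) h1
    rw [hinnerT]
    calc ‖(inner A (ξ i) x : A)‖ ^ 2 = ‖star (inner A (ξ i) x : A) * (inner A (ξ i) x : A)‖ := by
          rw [CStarRing.norm_star_mul_self, pow_two]
      _ ≤ _ := h2
  set D : ℝ := 2 * C * (n : ℝ) + 1 with hDdef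
  have hD : 0 < D := by positivity
  have hlow : ∀ x : E, (D⁻¹) ^ 2 * ‖x‖ ^ 2 ≤ ‖(inner A x ((TB : E →L[ℂ] E) x) : A)‖ := by
    intro x
    set K : ℝ := ‖(inner A x ((TB : E →L[ℂ] E) x) : A)‖ with hKdef
    have hK0 : 0 ≤ K := norm_nonneg _
    have hsK : Real.sqrt K ^ 2 = K := Real.sq_sqrt hK0
    have hbK : ∀ i, ‖(inner A x (ξ i) : A)‖ ≤ Real.sqrt K := by
      intro i
      have hswap : ‖(inner A x (ξ i) : A)‖ = ‖(inner A (ξ i) x : A)‖ := by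
        rw [← CSM.star_inner, norm_star]
      rw [hswap]
      exact (Real.le_sqrt (norm_nonneg _) hK0).mpr (hterm x i)
    obtain ⟨p, hpx, hpn⟩ := hC x
    have hp1 : ∀ i, ‖p.1 i‖ ≤ C * ‖x‖ :=
      fun i => le_trans (le_trans (norm_le_pi_norm p.1 i) (norm_fst_le p)) hpn
    have hp2 : ∀ i, ‖p.2 i‖ ≤ C * ‖x‖ :=
      fun i => le_trans (le_trans (norm_le_pi_norm p.2 i) (norm_snd_le p)) hpn
    have hxx : (inner A x x : A)
        = ∑ i, (p.1 i • (inner A x (ξ i) : A) + (inner A x (ξ i) : A) * p.2 i) := by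
      have hΦp : Φ p = ∑ i, (p.1 i • ξ i + ξ i <• p.2 i) := rfl
      calc (inner A x x : A) = (inner A x (Φ p) : A) := by rw [hpx]
        _ = ∑ i, (inner A x (p.1 i • ξ i + ξ i <• p.2 i) : A) := by
            rw [hΦp, CSM.inner_sum_right]
        _ = _ := by
            refine Finset.sum_congr rfl fun i _ => ?_
            rw [CSM.inner_add_right, CSM.inner_smul_right_complex,
              CSM.inner_op_smul_right]
    have hx2 : ‖x‖ ^ 2 ≤ D * ‖x‖ * Real.sqrt K := by
      have hsum : ‖x‖ ^ 2 ≤ ∑ _i : Fin n, 2 * ((C * ‖x‖) * Real.sqrt K) := by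
        calc ‖x‖ ^ 2 = ‖(inner A x x : A)‖ := CSM.norm_sq_eq
          _ = ‖∑ i, (p.1 i • (inner A x (ξ i) : A) + (inner A x (ξ i) : A) * p.2 i)‖ := by
              rw [hxx]
          _ ≤ ∑ i, ‖p.1 i • (inner A x (ξ i) : A) + (inner A x (ξ i) : A) * p.2 i‖ :=
              norm_sum_le _ _
          _ ≤ ∑ _i : Fin n, 2 * ((C * ‖x‖) * Real.sqrt K) := by
              refine Finset.sum_le_sum fun i _ => ?_
              calc ‖p.1 i • (inner A x (ξ i) : A) + (inner A x (ξ i) : A) * p.2 i‖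
                  ≤ ‖p.1 i • (inner A x (ξ i) : A)‖ + ‖(inner A x (ξ i) : A) * p.2 i‖ :=
                    norm_add_le _ _
                _ ≤ ‖p.1 i‖ * ‖(inner A x (ξ i) : A)‖ + ‖(inner A x (ξ i) : A)‖ * ‖p.2 i‖ := by
                    rw [norm_smul]
                    gcongr
                    exact norm_mul_le _ _
                _ ≤ (C * ‖x‖) * Real.sqrt K + Real.sqrt K * (C * ‖x‖) := by
                    have hCx : (0:ℝ) ≤ C * ‖x‖ := by positivity
                    refine add_le_add ?_ ?_
                    · exact mul_le_mul (hp1 i) (hbK i) (norm_nonneg _) hCx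
                    · exact mul_le_mul (hbK i) (hp2 i) (norm_nonneg _) (Real.sqrt_nonneg _)
                _ = 2 * ((C * ‖x‖) * Real.sqrt K) := by ring
      have hsumval : ∑ _i : Fin n, 2 * ((C * ‖x‖) * Real.sqrt K)
          = (n : ℝ) * (2 * ((C * ‖x‖) * Real.sqrt K)) := by
        rw [Finset.sum_const, Finset.card_univ, Fintype.card_fin, nsmul_eq_mul]
      rw [hsumval] at hsum
      refine hsum.trans ?_
      have h0 : (0:ℝ) ≤ Real.sqrt K := Real.sqrt_nonneg _
      have h1 : (0:ℝ) ≤ ‖x‖ := norm_nonneg _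
      nlinarith [mul_nonneg (mul_nonneg h1 h0) hCpos.le]
    by_cases hx0 : ‖x‖ = 0
    · rw [hx0]
      simpa using hK0
    · have hx0' : 0 < ‖x‖ := lt_of_le_of_ne (norm_nonneg x) (Ne.symm hx0)
      have h1 : ‖x‖ ≤ D * Real.sqrt K := by
        have h2 : ‖x‖ * ‖x‖ ≤ (D * Real.sqrt K) * ‖x‖ := by nlinarith [hx2]
        exact le_of_mul_le_mul_right h2 hx0'
      have h2 : ‖x‖ ^ 2 ≤ (D * Real.sqrt K) ^ 2 := by
        nlinarith [Real.sqrt_nonneg K, hD.le, norm_nonneg x]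
      calc (D⁻¹) ^ 2 * ‖x‖ ^ 2 ≤ (D⁻¹) ^ 2 * (D * Real.sqrt K) ^ 2 :=
            mul_le_mul_of_nonneg_left h2 (by positivity)
        _ = K := by
            rw [mul_pow, ← mul_assoc, ← mul_pow, inv_mul_cancel₀ hD.ne', one_pow, one_mul, hsK]
  have hUnit : IsUnit TB := isUnit_of_inner_lower_bound hTBsa (by positivity) hlow
  obtain ⟨u, hu⟩ := hUnit
  set S : ↥(adjAlg A E) := ↑u⁻¹ with hSdef
  have hTS : TB * S = 1 := by
    rw [hSdef, ← hu]
    exact u.mul_inv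
  have hSsa : IsSelfAdjoint S := by
    have h1 : star S * TB = 1 := by
      calc star S * TB = star S * star TB := by rw [hTBsa.star_eq]
        _ = star (TB * S) := (star_mul _ _).symm
        _ = 1 := by rw [hTS, star_one]
    have h2 : S = star S := by
      calc S = 1 * S := (one_mul S).symm
        _ = star S * TB * S := by rw [h1]
        _ = star S * (TB * S) := mul_assoc _ _ _
        _ = star S := by rw [hTS, mul_one]
    exact h2.symm
  have hid : ∀ z : E, z = ∑ i, ξ i <• (inner A ((S : E →L[ℂ] E) (ξ i)) z : A) := by
    intro z
    have h1 : (TB : E →L[ℂ] E) ((S : E →L[ℂ] E) z) = z := by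
      calc (TB : E →L[ℂ] E) ((S : E →L[ℂ] E) z)
          = ((TB * S : ↥(adjAlg A E)) : E →L[ℂ] E) z := rfl
        _ = z := by rw [hTS, OneMemClass.coe_one]; rfl
    have hswap : ∀ i, (inner A (ξ i) ((S : E →L[ℂ] E) z) : A)
        = inner A ((S : E →L[ℂ] E) (ξ i)) z := by
      intro i
      have h3 := star_inner_left S (ξ i) z
      rw [hSsa.star_eq] at h3
      exact h3.symm
    conv_lhs => rw [← h1, hTBapp]
    exact Finset.sum_congr rfl fun i _ => by rw [hswap i]
  constructor
  · refine ⟨1, ?_, fun T' _ => ⟨one_mul T', mul_one T'⟩⟩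
    have hIdMem : (1 : E →L[ℂ] E) ∈ (Submodule.span ℂ
        {T : E →L[ℂ] E | ∃ x y : E, ∀ z, T z = x <• (inner A y z : A)}) := by
      have hrepr : (1 : E →L[ℂ] E) = ∑ i, rankOne A (ξ i) ((S : E →L[ℂ] E) (ξ i)) := by
        ext z
        rw [ContinuousLinearMap.sum_apply]
        calc (1 : E →L[ℂ] E) z = z := rfl
          _ = ∑ i, ξ i <• (inner A ((S : E →L[ℂ] E) (ξ i)) z : A) := hid z
          _ = _ := rfl
      rw [hrepr]
      exact Submodule.sum_mem _ fun i _ =>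
        Submodule.subset_span ⟨ξ i, (S : E →L[ℂ] E) (ξ i), fun z => rfl⟩
    exact subset_closure hIdMem
  · intro f hf
    refine ⟨∑ i, (S : E →L[ℂ] E) (ξ i) <• star (f (ξ i)), fun x => ?_⟩
    calc f x = f (∑ i, ξ i <• (inner A ((S : E →L[ℂ] E) (ξ i)) x : A)) := by rw [← hid x]
      _ = ∑ i, f (ξ i <• (inner A ((S : E →L[ℂ] E) (ξ i)) x : A)) := map_sum f _ _
      _ = ∑ i, f (ξ i) * (inner A ((S : E →L[ℂ] E) (ξ i)) x : A) :=
          Finset.sum_congr rfl fun i _ => hf _ _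
      _ = (inner A (∑ i, (S : E →L[ℂ] E) (ξ i) <• star (f (ξ i))) x : A) := by
          rw [CSM.inner_sum_left]
          exact (Finset.sum_congr rfl fun i _ => by
            rw [CSM.inner_op_smul_left, star_star]).symm

end
end
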